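/- Let h : ℝⁿ → ℝ be continuously differentiable, let f : ℝⁿ → ℝⁿ, u : ℝⁿ → ℝᵐ, and g : ℝⁿ → (ℝᵐ →L ℝⁿ) be continuous, let ψ₁, …, ψ_p : ℝⁿ → ℝⁿ (p ≥ 1) be continuous, and let γ : ℝ → ℝ be a locally Lipschitz extended class-K function. Suppose that for all x ∈ ℝⁿ, ⟪∇h(x), f(x) + g(x)(u(x))⟫ ≥ -γ(h(x)) - min_{1 ≤ i ≤ p} ⟪∇h(x), ψᵢ(x)⟫. Then for every differentiable curve x : [0, ∞) → ℝⁿ satisfying x′(t) - f(x(t)) - g(x(t))(u(x(t))) ∈ convexHull{ψ₁(x(t)), …, ψ_p(x(t))} for all t ≥ 0, the safe set C = {x : h(x) ≥ 0} is asymptotically stable along x: (i) if h(x(0)) ≥ 0 then h(x(t)) ≥ 0 for all t ≥ 0, and (ii) min(h(x(t)), 0) → 0 as t → ∞. -/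

import Mathlib

open scoped RealInnerProductSpace

private lemma aux_mono (y y' : ℝ → ℝ) (a b : ℝ)
    (hy : ∀ t ∈ Set.Icc a b, HasDerivAt y (y' t) t)
    (hpos : ∀ t ∈ Set.Ioo a b, 0 ≤ y' t) : MonotoneOn y (Set.Icc a b) := by
  apply monotoneOn_of_deriv_nonneg (convex_Icc a b)
  · exact fun t ht => (hy t ht).continuousAt.continuousWithinAt
  · intro t ht; rw [interior_Icc] at ht
    exact ((hy t (Set.Ioo_subset_Icc_self ht)).differentiableAt).differentiableWithinAt
  · intro t ht; rw [interior_Icc] at ht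
    rw [(hy t (Set.Ioo_subset_Icc_self ht)).deriv]; exact hpos t ht

private lemma aux_inv (y y' : ℝ → ℝ)
    (hy : ∀ t ∈ Set.Ici (0:ℝ), HasDerivAt y (y' t) t)
    (hpos : ∀ t ∈ Set.Ici (0:ℝ), y t ≤ 0 → 0 ≤ y' t)
    (a : ℝ) (ha : 0 ≤ a) (hya : 0 ≤ y a) :
    ∀ t, a ≤ t → 0 ≤ y t := by
  intro T hT
  by_contra hneg
  push_neg at hneg
  set S : Set ℝ := Set.Icc a T ∩ y ⁻¹' Set.Ici 0 with hS
  have hScl : IsClosed S := by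
    apply ContinuousOn.preimage_isClosed_of_isClosed ?_ isClosed_Icc isClosed_Ici
    intro t ht
    exact (hy t (le_trans ha ht.1)).continuousAt.continuousWithinAt
  have hSne : S.Nonempty := ⟨a, ⟨le_refl a, hT⟩, hya⟩
  have hSbdd : BddAbove S := ⟨T, fun s hs => hs.1.2⟩
  have ht₀S : sSup S ∈ S := hScl.csSup_mem hSne hSbdd
  set t₀ := sSup S with ht₀
  have ht₀lt : t₀ < T := lt_of_le_of_ne ht₀S.1.2
    (fun heq => absurd (heq ▸ ht₀S.2) (not_le.2 hneg))
  have hlt : ∀ s ∈ Set.Ioc t₀ T, y s < 0 := by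
    intro s hs
    by_contra hge
    push_neg at hge
    have hsS : s ∈ S := ⟨⟨le_trans ht₀S.1.1 hs.1.le, hs.2⟩, hge⟩
    exact absurd (le_csSup hSbdd hsS) (not_le.2 hs.1)
  have hmono : MonotoneOn y (Set.Icc t₀ T) := by
    apply aux_mono y y' t₀ T
    · intro t ht; exact hy t (le_trans (le_trans ha ht₀S.1.1) ht.1)
    · intro t ht
      exact hpos t (le_trans (le_trans ha ht₀S.1.1) ht.1.le)
        (hlt t ⟨ht.1, ht.2.le⟩).le
  have hle := hmono (Set.left_mem_Icc.2 ht₀lt.le) (Set.right_mem_Icc.2 ht₀lt.le) ht₀lt.le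
  exact absurd (le_trans ht₀S.2 hle) (not_le.2 hneg)

private lemma aux_lin (y y' : ℝ → ℝ) (c : ℝ)
    (hy : ∀ t ∈ Set.Ici (0:ℝ), HasDerivAt y (y' t) t)
    (hge : ∀ t ∈ Set.Ici (0:ℝ), c ≤ y' t) :
    ∀ t, 0 ≤ t → y 0 + c * t ≤ y t := by
  intro T hT
  have hmono : MonotoneOn (fun t => y t - c * t) (Set.Icc 0 T) := by
    apply aux_mono _ (fun t => y' t - c) 0 T
    · intro t ht
      have h1 : HasDerivAt (fun s : ℝ => c * s) c t := by
        simpa using (hasDerivAt_id t).const_mul c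
      exact (hy t ht.1).sub h1
    · intro t ht
      have := hge t ht.1.le
      linarith
  have := hmono (Set.left_mem_Icc.2 hT) (Set.right_mem_Icc.2 hT) hT
  simp only [mul_zero, sub_zero] at this
  linarith

/-- **Asymptotic stability of the safe set under a robust control barrier function.**
Under the RCBF inequality, along every differentiable trajectory of the disturbed
system `ẋ ∈ f(x) + g(x)u(x) + co{ψ₁(x), …, ψ_p(x)}` on `[0, ∞)`:
(i) if `h(x(0)) ≥ 0` then `h(x(t)) ≥ 0` for all `t ≥ 0` (forward invariance), and
(ii) `min(h(x(t)), 0) → 0` as `t → ∞` (attractivity of the safe set). -/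
theorem rcbf_asymptotic_stability {n m p : ℕ} (hp : 0 < p)
    (h : EuclideanSpace ℝ (Fin n) → ℝ) (hh : ContDiff ℝ 1 h)
    (f : EuclideanSpace ℝ (Fin n) → EuclideanSpace ℝ (Fin n)) (hf : Continuous f)
    (u : EuclideanSpace ℝ (Fin n) → EuclideanSpace ℝ (Fin m)) (hu : Continuous u)
    (g : EuclideanSpace ℝ (Fin n) → (EuclideanSpace ℝ (Fin m) →L[ℝ] EuclideanSpace ℝ (Fin n)))
    (hg : Continuous g)
    (ψ : Fin p → EuclideanSpace ℝ (Fin n) → EuclideanSpace ℝ (Fin n))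
    (hψ : ∀ i, Continuous (ψ i))
    (γ : ℝ → ℝ) (hγlip : LocallyLipschitz γ) (hγcont : Continuous γ)
    (hγmono : StrictMono γ) (hγ0 : γ 0 = 0)
    (hRCBF : ∀ x : EuclideanSpace ℝ (Fin n),
      ⟪gradient h x, f x + g x (u x)⟫ ≥
        -γ (h x) - Finset.univ.inf' ⟨⟨0, hp⟩, Finset.mem_univ _⟩
          (fun i : Fin p => ⟪gradient h x, ψ i x⟫))
    (x x' : ℝ → EuclideanSpace ℝ (Fin n))
    (hx : ∀ t ∈ Set.Ici (0 : ℝ), HasDerivAt x (x' t) t)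
    (hincl : ∀ t ∈ Set.Ici (0 : ℝ),
      x' t - f (x t) - g (x t) (u (x t)) ∈
        convexHull ℝ (Set.range fun i : Fin p => ψ i (x t))) :
    (h (x 0) ≥ 0 → ∀ t ∈ Set.Ici (0 : ℝ), h (x t) ≥ 0) ∧
    Filter.Tendsto (fun t : ℝ => min (h (x t)) 0) Filter.atTop (nhds 0) := by
  set y : ℝ → ℝ := fun t => h (x t) with hy_def
  set y' : ℝ → ℝ := fun t => ⟪gradient h (x t), x' t⟫ with hy'_def
  have hdiff : ∀ z, DifferentiableAt ℝ h z := fun z => hh.differentiable one_ne_zero z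
  have hinner : ∀ (z : EuclideanSpace ℝ (Fin n)) (v : EuclideanSpace ℝ (Fin n)),
      ⟪gradient h z, v⟫ = fderiv ℝ h z v := by
    intro z v
    rw [gradient, InnerProductSpace.toDual_symm_apply]
  have hyd : ∀ t ∈ Set.Ici (0:ℝ), HasDerivAt y (y' t) t := by
    intro t ht
    have h2 := ((hdiff (x t)).hasFDerivAt).comp_hasDerivAt t (hx t ht)
    show HasDerivAt y (⟪gradient h (x t), x' t⟫) t
    rw [hinner]; exact h2
  have key : ∀ t ∈ Set.Ici (0:ℝ), -γ (y t) ≤ y' t := by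
    intro t ht
    set w := gradient h (x t) with hw
    set c := Finset.univ.inf' ⟨⟨0, hp⟩, Finset.mem_univ _⟩
      (fun i : Fin p => ⟪w, ψ i (x t)⟫) with hc
    have hhull : convexHull ℝ (Set.range fun i : Fin p => ψ i (x t)) ⊆
        {v | c ≤ ⟪w, v⟫} := by
      apply convexHull_min
      · rintro _ ⟨i, rfl⟩
        show c ≤ ⟪w, ψ i (x t)⟫
        exact Finset.inf'_le (fun i : Fin p => ⟪w, ψ i (x t)⟫) (Finset.mem_univ i)
      · exact convex_halfSpace_ge
          ⟨fun a b => inner_add_right w a b, fun r v => real_inner_smul_right w v r⟩ c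
    have hd : c ≤ ⟪w, x' t - f (x t) - g (x t) (u (x t))⟫ := hhull (hincl t ht)
    have hsplit : ⟪w, x' t⟫ =
        ⟪w, f (x t) + g (x t) (u (x t))⟫ + ⟪w, x' t - f (x t) - g (x t) (u (x t))⟫ := by
      rw [← inner_add_right]
      congr 1
      abel
    have h1 := hRCBF (x t)
    show -γ (h (x t)) ≤ ⟪w, x' t⟫
    rw [hsplit]
    linarith
  have hpos : ∀ t ∈ Set.Ici (0:ℝ), y t ≤ 0 → 0 ≤ y' t := by
    intro t ht hyt
    have hglt : γ (y t) ≤ 0 := hγ0 ▸ hγmono.monotone hyt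
    linarith [key t ht]
  constructor
  · intro h0 t ht
    exact aux_inv y y' hyd hpos 0 le_rfl h0 t ht
  · by_cases hcase : ∃ a, 0 ≤ a ∧ 0 ≤ y a
    · obtain ⟨a, ha, hya⟩ := hcase
      have hev : ∀ᶠ t in Filter.atTop, min (y t) 0 = 0 := by
        filter_upwards [Filter.eventually_ge_atTop a] with t ht
        exact min_eq_right (aux_inv y y' hyd hpos a ha hya t ht)
      exact Filter.Tendsto.congr' (hev.mono fun t h => h.symm) tendsto_const_nhds
    · push_neg at hcase
      have hpos' : ∀ t ∈ Set.Ici (0:ℝ), 0 ≤ y' t :=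
        fun t ht => hpos t ht (hcase t ht).le
      have hmonoIci : MonotoneOn y (Set.Ici 0) := by
        apply monotoneOn_of_deriv_nonneg (convex_Ici 0)
        · exact fun t ht => (hyd t ht).continuousAt.continuousWithinAt
        · intro t ht; rw [interior_Ici] at ht
          exact (hyd t (Set.mem_Ioi.mp ht).le).differentiableAt.differentiableWithinAt
        · intro t ht; rw [interior_Ici] at ht
          rw [(hyd t (Set.mem_Ioi.mp ht).le).deriv]; exact hpos' t (Set.mem_Ioi.mp ht).le
      set w : ℝ → ℝ := fun t => y (max t 0) with hwdef
      have hwmono : Monotone w := fun s t hst =>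
        hmonoIci (le_max_right s 0) (le_max_right t 0) (max_le_max hst le_rfl)
      have hwneg : ∀ t, w t < 0 := fun t => hcase _ (le_max_right t 0)
      have hbdd : BddAbove (Set.range w) := ⟨0, by rintro _ ⟨t, rfl⟩; exact (hwneg t).le⟩
      have htend := tendsto_atTop_ciSup hwmono hbdd
      set L := ⨆ t, w t with hLdef
      have hL0 : L ≤ 0 := ciSup_le fun t => (hwneg t).le
      have hLeq : L = 0 := by
        by_contra hne
        have hLlt : L < 0 := lt_of_le_of_ne hL0 hne
        have hcpos : 0 < -γ L := by
          have := hγmono hLlt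
          rw [hγ0] at this
          linarith
        have hge : ∀ t ∈ Set.Ici (0:ℝ), -γ L ≤ y' t := by
          intro t ht
          have hyL : y t ≤ L := by
            have h1 : w t ≤ L := le_ciSup hbdd t
            simpa [hwdef, max_eq_left (Set.mem_Ici.mp ht)] using h1
          have h2 := hγmono.monotone hyL
          linarith [key t ht]
        have hlin := aux_lin y y' (-γ L) hyd hge
        set T := max 0 ((1 - y 0) / (-γ L)) with hTdef
        have hT0 : 0 ≤ T := le_max_left _ _
        have h4 := hlin T hT0
        have h2 : (1 - y 0) / (-γ L) ≤ T := le_max_right _ _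
        rw [div_le_iff₀ hcpos] at h2
        rw [mul_comm] at h2
        have h5 := hcase T hT0
        linarith
      have htend0 : Filter.Tendsto w Filter.atTop (nhds 0) := hLeq ▸ htend
      have heq : w =ᶠ[Filter.atTop] fun t => min (y t) 0 := by
        filter_upwards [Filter.eventually_ge_atTop (0:ℝ)] with t ht
        show y (max t 0) = min (y t) 0
        rw [max_eq_left ht, min_eq_left (hcase t ht).le]
      exact Filter.Tendsto.congr' heq htend0
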